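/- Let two half-planes M⁻, M⁺ in H^3 share a geodesic line χ, let p ∈ χ, and suppose geodesic rays ψ⁻ ⊂ M⁻ and ψ⁺ ⊂ M⁺ from p form an intrinsically geodesic path in M⁻ ∪ M⁺, making angle γ ∈ (0, π) with χ. Let ψ be a geodesic ray from p inside the convex dihedral wedge spanned by M⁻ and M⁺, let M be the half-plane spanned by χ and ψ, let φ⁻, φ⁺ be the dihedral angles between M and M⁻, M⁺ respectively, β⁻, β⁺ the angles between ψ and ψ⁻, ψ⁺ respectively, and α the angle between ψ and χ. Set φ = φ⁻ + φ⁺ and β = β⁻ + β⁺. If for some α₀ ∈ (0, π/2) all of α, φ⁻, φ⁺, β⁻, β⁺ lie in [α₀, π - α₀], then π - φ ≤ (π - β)/(sin²α₀ · sin γ). -/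

import Mathlib

open Real

lemma sin_lb_aux {a y : ℝ} (ha : 0 ≤ a) (h1 : a ≤ y) (h2 : y ≤ π - a) :
    Real.sin a ≤ Real.sin y := by
  have hpi := Real.pi_pos
  rcases le_total y (π / 2) with h | h
  · exact Real.strictMonoOn_sin.monotoneOn
      ⟨by linarith, by linarith⟩ ⟨by linarith, h⟩ h1
  · rw [show Real.sin y = Real.sin (π - y) from (Real.sin_pi_sub y).symm]
    exact Real.strictMonoOn_sin.monotoneOn
      ⟨by linarith, by linarith⟩ ⟨by linarith, by linarith⟩ (by linarith)

lemma keyB {a t : ℝ} (ha : 0 < a) (ha2 : a ≤ π / 2) (ht : 0 ≤ t) (ht2 : t ≤ π - 2 * a) :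
    t * Real.sin a ≤ Real.cos a - Real.cos (t + a) := by
  set f : ℝ → ℝ := fun t => Real.cos a - Real.cos (t + a) - t * Real.sin a with hf
  have hd : ∀ x : ℝ, HasDerivAt f (Real.sin (x + a) - Real.sin a) x := by
    intro x
    have h1 : HasDerivAt (fun t : ℝ => Real.cos (t + a)) (-Real.sin (x + a)) x := by
      simpa [Function.comp_def] using (Real.hasDerivAt_cos (x + a)).comp x ((hasDerivAt_id x).add_const a)
    have h2 : HasDerivAt (fun t : ℝ => t * Real.sin a) (Real.sin a) x := by
      simpa using (hasDerivAt_id x).mul_const (Real.sin a)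
    simpa [hf, Pi.sub_def] using ((hasDerivAt_const x (Real.cos a)).sub h1).sub h2
  have hmono : MonotoneOn f (Set.Icc 0 (π - 2 * a)) := by
    apply monotoneOn_of_deriv_nonneg (convex_Icc _ _)
    · exact (Continuous.continuousOn (by continuity))
    · intro x _; exact (hd x).differentiableAt.differentiableWithinAt
    · intro x hx
      rw [interior_Icc] at hx
      rw [(hd x).deriv]
      have : Real.sin a ≤ Real.sin (x + a) :=
        sin_lb_aux (le_of_lt ha) (by linarith [hx.1]) (by linarith [hx.2])
      linarith
  have h0 : f 0 ≤ f t := hmono ⟨le_refl 0, by linarith⟩ ⟨ht, ht2⟩ ht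
  simp only [hf, zero_add, zero_mul, sub_zero, sub_self] at h0
  linarith [h0]

lemma fact2 {a φm φp : ℝ} (ha : 0 < a) (ha2 : a < π / 2)
    (h1 : a ≤ φm) (h2 : φm ≤ π - a) (h3 : a ≤ φp) (h4 : φp ≤ π - a)
    (hφ : φm + φp ≤ π) :
    Real.sin a * (π - (φm + φp)) ≤ Real.cos φm + Real.cos φp := by
  have hpi := Real.pi_pos
  set s := (φm + φp) / 2 with hs
  set t := π - (φm + φp) with htdef
  have e1 : Real.cos φm + Real.cos φp = 2 * Real.cos s * Real.cos ((φm - φp) / 2) :=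
    Real.cos_add_cos φm φp
  have hc1 : 0 ≤ Real.cos s :=
    Real.cos_nonneg_of_mem_Icc ⟨by simp only [hs]; linarith, by simp only [hs]; linarith⟩
  have hc2 : Real.cos (s - a) ≤ Real.cos ((φm - φp) / 2) := by
    rw [← Real.cos_abs ((φm - φp) / 2)]
    apply Real.cos_le_cos_of_nonneg_of_le_pi (abs_nonneg _) (by simp only [hs]; linarith)
    rw [abs_le]
    constructor <;> simp only [hs] <;> linarith
  have e2 : 2 * Real.cos s * Real.cos (s - a) = Real.cos a - Real.cos (t + a) := by
    have exp : ∀ x y : ℝ, 2 * Real.cos x * Real.cos y = Real.cos (x + y) + Real.cos (x - y) :=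
      fun x y => by rw [Real.cos_add, Real.cos_sub]; ring
    rw [exp s (s - a), show s + (s - a) = π - (t + a) from by simp only [hs, htdef]; ring,
        show s - (s - a) = a from by ring, Real.cos_pi_sub]
    ring
  have hk : t * Real.sin a ≤ Real.cos a - Real.cos (t + a) :=
    keyB ha (le_of_lt ha2) (by simp only [htdef]; linarith) (by simp only [htdef]; linarith)
  nlinarith [mul_le_mul_of_nonneg_left hc2 (by linarith : (0:ℝ) ≤ 2 * Real.cos s)]

/-- Two half-planes `M⁻, M⁺` in `H³` share a geodesic `χ`; rays `ψ⁻ ⊂ M⁻`, `ψ⁺ ⊂ M⁺` from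
`p ∈ χ` form an intrinsic geodesic of `M⁻ ∪ M⁺` making angle `γ ∈ (0, π)` with `χ`; a ray
`ψ` from `p` in the convex wedge makes angle `α` with `χ` and angles `β⁻, β⁺` with
`ψ⁻, ψ⁺`; the half-plane `M` through `χ` and `ψ` makes dihedral angles `φ⁻, φ⁺` with
`M⁻, M⁺`.  In the spherical link of `p` these data satisfy the spherical cosine laws
`cos β⁺ = cos γ cos α + sin γ sin α cos φ⁺` and
`cos β⁻ = -cos γ cos α + sin γ sin α cos φ⁻`, and `β = β⁻ + β⁺ ≤ π`.
If all of `α, φ⁻, φ⁺, β⁻, β⁺` lie in `[α₀, π - α₀]` for some `α₀ ∈ (0, π/2)`, then with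
`φ = φ⁻ + φ⁺` we have `π - φ ≤ (π - β)/(sin²α₀ · sin γ)`. -/
theorem dihedral_angle_bound (γ α φm φp βm βp α₀ : ℝ)
    (hγ : γ ∈ Set.Ioo 0 π)
    (hα₀ : α₀ ∈ Set.Ioo 0 (π / 2))
    (hcosp : Real.cos βp = Real.cos γ * Real.cos α + Real.sin γ * Real.sin α * Real.cos φp)
    (hcosm : Real.cos βm = -(Real.cos γ * Real.cos α) + Real.sin γ * Real.sin α * Real.cos φm)
    (hβ : βm + βp ≤ π)
    (hrange : ∀ x ∈ ({α, φm, φp, βm, βp} : Set ℝ), α₀ ≤ x ∧ x ≤ π - α₀) :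
    π - (φm + φp) ≤ (π - (βm + βp)) / (Real.sin α₀ ^ 2 * Real.sin γ) := by
  have hpi := Real.pi_pos
  obtain ⟨hα₀0, hα₀2⟩ := hα₀
  obtain ⟨hα1, hα2⟩ := hrange α (by simp)
  obtain ⟨hφm1, hφm2⟩ := hrange φm (by simp)
  obtain ⟨hφp1, hφp2⟩ := hrange φp (by simp)
  obtain ⟨hβm1, hβm2⟩ := hrange βm (by simp)
  obtain ⟨hβp1, hβp2⟩ := hrange βp (by simp)
  have hsγ : 0 < Real.sin γ := Real.sin_pos_of_pos_of_lt_pi hγ.1 hγ.2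
  have hsα₀ : 0 < Real.sin α₀ := Real.sin_pos_of_pos_of_lt_pi hα₀0 (by linarith)
  have hc : 0 < Real.sin α₀ ^ 2 * Real.sin γ := by positivity
  rw [le_div_iff₀ hc]
  have hβnn : 0 ≤ π - (βm + βp) := by linarith
  -- fact 1 : cos βm + cos βp ≤ π - (βm + βp)
  have e := Real.cos_add_cos βm βp
  have hb0 : 0 ≤ Real.cos ((βm + βp) / 2) :=
    Real.cos_nonneg_of_mem_Icc ⟨by linarith, by linarith⟩
  have hb1 : Real.cos ((βm - βp) / 2) ≤ 1 := Real.cos_le_one _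
  have hb2 : Real.cos ((βm + βp) / 2) ≤ π / 2 - (βm + βp) / 2 := by
    rw [← Real.sin_pi_div_two_sub]
    exact Real.sin_le (by linarith)
  have fact1 : Real.cos βm + Real.cos βp ≤ π - (βm + βp) := by
    nlinarith [mul_le_mul_of_nonneg_left hb1 hb0]
  by_cases hφ : φm + φp ≤ π
  · have A : Real.sin α₀ * (π - (φm + φp)) ≤ Real.cos φm + Real.cos φp :=
      fact2 hα₀0 hα₀2 hφm1 hφm2 hφp1 hφp2 hφ
    have hφnn : 0 ≤ π - (φm + φp) := by linarith
    have hA0 : 0 ≤ Real.cos φm + Real.cos φp := le_trans (by positivity) A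
    have hsum : Real.cos βm + Real.cos βp
        = Real.sin γ * Real.sin α * (Real.cos φm + Real.cos φp) := by
      rw [hcosm, hcosp]; ring
    have hsα : Real.sin α₀ ≤ Real.sin α := sin_lb_aux (le_of_lt hα₀0) hα1 hα2
    nlinarith [mul_le_mul_of_nonneg_left A (by positivity : (0:ℝ) ≤ Real.sin α₀ * Real.sin γ),
      mul_le_mul_of_nonneg_right hsα (by positivity : (0:ℝ) ≤ Real.sin γ * (Real.cos φm + Real.cos φp))]
  · push_neg at hφ
    have : (π - (φm + φp)) * (Real.sin α₀ ^ 2 * Real.sin γ) ≤ 0 :=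
      mul_nonpos_of_nonpos_of_nonneg (by linarith) (le_of_lt hc)
    linarith
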